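/- Let ℓ : ℝ × ℝ → ℝ≥0 be differentiable with gradient bounded by K and convex in its second argument, and let E(x_{1:n}) = min_{f ∈ F^T} (1/n) Σ_i ℓ(f(x_i), f*(x_i)) and Ê be the value returned by approximate optimization routines applied to the plug-in problem with estimate f̂* in place of f*, where the inner minimization routine has optimality gap at most δ and the outer maximization routine has optimality gap at most ν. Then |Ê − max_{x_{1:n}} E(x_{1:n})| ≤ (δ + ν) + 3K · sup_{x∈X} |f̂*(x) − f*(x)|. -/
import Mathlib


/-- error bound for the plug-in max-min anomaly-generation program.
The value `Ehat` returned by approximate optimization routines (inner optimality gap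
`δ`, outer optimality gap `ν`) applied to the plug-in problem with estimate `fhat`
differs from the population max-min value `Epop` by at most
`(δ + ν) + 3 K ε`, where `ε` bounds the sup-norm error of `fhat` for `fstar`. -/
theorem stmt_2 {X : Type*} [Nonempty X]
    (F : Set (X → ℝ)) (hF : F.Nonempty)
    (ℓ : ℝ → ℝ → ℝ) (K : ℝ) (hK : 0 ≤ K)
    (hnonneg : ∀ a b, 0 ≤ ℓ a b)
    (hLip1 : ∀ a a' b, |ℓ a b - ℓ a' b| ≤ K * |a - a'|)
    (hLip2 : ∀ a b b', |ℓ a b - ℓ a b'| ≤ K * |b - b'|)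
    (hconv : ∀ a, ConvexOn ℝ Set.univ (fun b => ℓ a b))
    (fstar fhat : X → ℝ) (ε : ℝ) (herr : ∀ x, |fhat x - fstar x| ≤ ε)
    (n : ℕ) (hn : 0 < n)
    (δ ν : ℝ) (hδ : 0 ≤ δ) (hν : 0 ≤ ν)
    -- the inner minimization routine and its approximate optimality
    (ftil : (Fin n → X) → (X → ℝ))
    (hftilF : ∀ x, ftil x ∈ F)
    (hinner : ∀ (x : Fin n → X), ∀ f ∈ F,
      (∑ i, ℓ (ftil x (x i)) (fhat (x i))) / n ≤
        (∑ i, ℓ (f (x i)) (fhat (x i))) / n + δ)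
    -- the outer maximization routine and its approximate optimality
    (xt : Fin n → X)
    (houter : ∀ x : Fin n → X,
      (∑ i, ℓ (ftil x (x i)) (fhat (x i))) / n ≤
        (∑ i, ℓ (ftil xt (xt i)) (fhat (xt i))) / n + ν)
    -- the plug-in value and the population max-min value
    (Ehat : ℝ) (hEhat : Ehat = (∑ i, ℓ (ftil xt (xt i)) (fhat (xt i))) / n)
    (Epop : ℝ)
    (hEpop : IsLUB {v : ℝ | ∃ x : Fin n → X,
      IsGLB {w : ℝ | ∃ f ∈ F, w = (∑ i, ℓ (f (x i)) (fstar (x i))) / n} v} Epop) :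
    |Ehat - Epop| ≤ (δ + ν) + 3 * K * ε := by
  obtain ⟨x0⟩ := ‹Nonempty X›
  have hε : 0 ≤ ε := le_trans (abs_nonneg _) (herr x0)
  have hKε : 0 ≤ K * ε := mul_nonneg hK hε
  have hn' : (0:ℝ) < n := by exact_mod_cast hn
  have hsum : ∀ (x : Fin n → X) (f : X → ℝ),
      |(∑ i, ℓ (f (x i)) (fhat (x i))) / n - (∑ i, ℓ (f (x i)) (fstar (x i))) / n| ≤ K * ε := by
    intro x f
    rw [div_sub_div_same, abs_div, abs_of_pos hn', div_le_iff₀ hn']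
    calc |∑ i, ℓ (f (x i)) (fhat (x i)) - ∑ i, ℓ (f (x i)) (fstar (x i))|
        = |∑ i, (ℓ (f (x i)) (fhat (x i)) - ℓ (f (x i)) (fstar (x i)))| := by
          rw [Finset.sum_sub_distrib]
      _ ≤ ∑ i, |ℓ (f (x i)) (fhat (x i)) - ℓ (f (x i)) (fstar (x i))| :=
          Finset.abs_sum_le_sum_abs _ _
      _ ≤ ∑ _i : Fin n, K * ε := by
          apply Finset.sum_le_sum
          intro i _
          exact le_trans (hLip2 _ _ _) (mul_le_mul_of_nonneg_left (herr _) hK)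
      _ = K * ε * n := by simp [mul_comm]
  -- Lower bound: Epop ≤ Ehat + ν + K ε
  have hlow : Epop ≤ Ehat + ν + K * ε := by
    apply hEpop.2
    rintro v ⟨x, hv⟩
    have h1 : v ≤ (∑ i, ℓ (ftil x (x i)) (fstar (x i))) / n :=
      hv.1 ⟨ftil x, hftilF x, rfl⟩
    have h2 := hsum x (ftil x)
    have h3 := houter x
    rw [← hEhat] at h3
    have := abs_le.mp h2
    linarith [this.1, this.2]
  -- Upper bound: Ehat ≤ Epop + δ + K ε
  have hupp : Ehat ≤ Epop + δ + K * ε := by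
    set S := {w : ℝ | ∃ f ∈ F, w = (∑ i, ℓ (f (xt i)) (fstar (xt i))) / n} with hS
    have hSne : S.Nonempty := by
      obtain ⟨f, hf⟩ := hF
      exact ⟨_, f, hf, rfl⟩
    have hSbdd : BddBelow S := by
      refine ⟨0, ?_⟩
      rintro w ⟨f, hf, rfl⟩
      exact div_nonneg (Finset.sum_nonneg fun i _ => hnonneg _ _) (le_of_lt hn')
    have hglb : IsGLB S (sInf S) := isGLB_csInf hSne hSbdd
    have hmem : sInf S ≤ Epop := hEpop.1 ⟨xt, hglb⟩
    have hlb : Ehat - δ - K * ε ≤ sInf S := by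
      apply le_csInf hSne
      rintro w ⟨f, hf, rfl⟩
      have h1 := hinner xt f hf
      rw [← hEhat] at h1
      have h2 := abs_le.mp (hsum xt f)
      linarith [h2.1, h2.2]
    linarith
  have h2Kε : 0 ≤ 2 * (K * ε) := by positivity
  rw [abs_sub_le_iff]
  constructor <;> nlinarith
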